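/- The root system of type G_2, realized with simple roots α, β as Δ = ±{α, β, α+β, 2α+β, 3α+β, 3α+2β}, admits no partition into three or more nonempty parts Δ_1, …, Δ_m such that each Δ_i and each Δ_i ⊔ Δ_j is closed. -/
import Mathlib


/-- A subset `S` of a root system `Δ` is closed if `γ, δ ∈ S` and `γ + δ ∈ Δ`
imply `γ + δ ∈ S`. -/
def RootClosed (Δ S : Set (Fin 2 → ℤ)) : Prop :=
  ∀ a ∈ S, ∀ b ∈ S, a + b ∈ Δ → a + b ∈ S

/-- The root system of type `G₂` realized in `ℤ²` with short simple root `α = (1,0)`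
and long simple root `β = (0,1)`: the 12 roots `±α, ±β, ±(α+β), ±(2α+β), ±(3α+β),
±(3α+2β)`. -/
def rootsG2 : Set (Fin 2 → ℤ) :=
  {v | ∃ a b : ℤ, ((a, b) = (1, 0) ∨ (a, b) = (0, 1) ∨ (a, b) = (1, 1) ∨
        (a, b) = (2, 1) ∨ (a, b) = (3, 1) ∨ (a, b) = (3, 2) ∨
        (a, b) = (-1, 0) ∨ (a, b) = (0, -1) ∨ (a, b) = (-1, -1) ∨
        (a, b) = (-2, -1) ∨ (a, b) = (-3, -1) ∨ (a, b) = (-3, -2)) ∧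
       v = ![a, b]}

theorem stmt8 (m : ℕ) (hm : 3 ≤ m) :
    ¬ ∃ P : Fin m → Set (Fin 2 → ℤ),
      (⋃ i, P i) = rootsG2 ∧
      (∀ i, (P i).Nonempty) ∧
      (Pairwise fun i j => Disjoint (P i) (P j)) ∧
      (∀ i, RootClosed rootsG2 (P i)) ∧
      (∀ i j, i ≠ j → RootClosed rootsG2 (P i ∪ P j)) := by
  rintro ⟨P, hcov, hne, hdisj, hcl, hcl2⟩
  -- uniqueness of part
  have uniq : ∀ (x : Fin 2 → ℤ) (a b : Fin m), x ∈ P a → x ∈ P b → a = b := by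
    intro x a b ha hb
    by_contra h
    exact Set.disjoint_left.mp (hdisj h) ha hb
  -- the key closure constraint
  have step : ∀ (x y z : Fin 2 → ℤ) (a b c : Fin m), x + y = z → z ∈ rootsG2 →
      x ∈ P a → y ∈ P b → z ∈ P c → c = a ∨ c = b := by
    intro x y z a b c hxy hz hx hy hzc
    by_contra h
    push_neg at h
    have hu : z ∈ P a ∪ P b := by
      subst hxy
      rcases eq_or_ne a b with rfl | hab
      · exact Or.inl (hcl a x hx y hy hz)
      · exact hcl2 a b hab x (Set.mem_union_left _ hx) y (Set.mem_union_right _ hy) hz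
    rcases hu with hu | hu
    · exact Set.disjoint_left.mp (hdisj h.1) hzc hu
    · exact Set.disjoint_left.mp (hdisj h.2) hzc hu
  -- roots memberships
  have rA : (![1,0] : Fin 2 → ℤ) ∈ rootsG2 := ⟨1, 0, by norm_num, rfl⟩
  have rB : (![0,1] : Fin 2 → ℤ) ∈ rootsG2 := ⟨0, 1, by norm_num, rfl⟩
  have rAB : (![1,1] : Fin 2 → ℤ) ∈ rootsG2 := ⟨1, 1, by norm_num, rfl⟩
  have r2 : (![2,1] : Fin 2 → ℤ) ∈ rootsG2 := ⟨2, 1, by norm_num, rfl⟩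
  have r3 : (![3,1] : Fin 2 → ℤ) ∈ rootsG2 := ⟨3, 1, by norm_num, rfl⟩
  have r32 : (![3,2] : Fin 2 → ℤ) ∈ rootsG2 := ⟨3, 2, by norm_num, rfl⟩
  have sA : (![-1,0] : Fin 2 → ℤ) ∈ rootsG2 := ⟨-1, 0, by norm_num, rfl⟩
  have sB : (![0,-1] : Fin 2 → ℤ) ∈ rootsG2 := ⟨0, -1, by norm_num, rfl⟩
  have sAB : (![-1,-1] : Fin 2 → ℤ) ∈ rootsG2 := ⟨-1, -1, by norm_num, rfl⟩
  have s2 : (![-2,-1] : Fin 2 → ℤ) ∈ rootsG2 := ⟨-2, -1, by norm_num, rfl⟩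
  have s3 : (![-3,-1] : Fin 2 → ℤ) ∈ rootsG2 := ⟨-3, -1, by norm_num, rfl⟩
  have s32 : (![-3,-2] : Fin 2 → ℤ) ∈ rootsG2 := ⟨-3, -2, by norm_num, rfl⟩
  -- extract colors
  have getc : ∀ x ∈ rootsG2, ∃ i, x ∈ P i := by
    intro x hx
    rw [← hcov] at hx
    exact Set.mem_iUnion.mp hx
  obtain ⟨fA, mA⟩ := getc _ rA
  obtain ⟨fB, mB⟩ := getc _ rB
  obtain ⟨fAB, mAB⟩ := getc _ rAB
  obtain ⟨f2, m2⟩ := getc _ r2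
  obtain ⟨f3, m3⟩ := getc _ r3
  obtain ⟨f32, m32⟩ := getc _ r32
  obtain ⟨gA, nA⟩ := getc _ sA
  obtain ⟨gB, nB⟩ := getc _ sB
  obtain ⟨gAB, nAB⟩ := getc _ sAB
  obtain ⟨g2, n2⟩ := getc _ s2
  obtain ⟨g3, n3⟩ := getc _ s3
  obtain ⟨g32, n32⟩ := getc _ s32
  -- each part index is one of the twelve colors
  have partIdx : ∀ l : Fin m, l = fA ∨ l = fB ∨ l = fAB ∨ l = f2 ∨ l = f3 ∨ l = f32 ∨
      l = gA ∨ l = gB ∨ l = gAB ∨ l = g2 ∨ l = g3 ∨ l = g32 := by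
    intro l
    obtain ⟨x, hx⟩ := hne l
    have hxr : x ∈ rootsG2 := by
      rw [← hcov]; exact Set.mem_iUnion_of_mem l hx
    obtain ⟨a, b, hab, rfl⟩ := hxr
    rcases hab with h|h|h|h|h|h|h|h|h|h|h|h <;>
      (simp only [Prod.mk.injEq] at h; obtain ⟨rfl, rfl⟩ := h)
    · exact Or.inl (uniq _ _ _ hx mA)
    · exact Or.inr (Or.inl (uniq _ _ _ hx mB))
    · exact Or.inr (Or.inr (Or.inl (uniq _ _ _ hx mAB)))
    · exact Or.inr (Or.inr (Or.inr (Or.inl (uniq _ _ _ hx m2))))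
    · exact Or.inr (Or.inr (Or.inr (Or.inr (Or.inl (uniq _ _ _ hx m3)))))
    · exact Or.inr (Or.inr (Or.inr (Or.inr (Or.inr (Or.inl (uniq _ _ _ hx m32))))))
    · exact Or.inr (Or.inr (Or.inr (Or.inr (Or.inr (Or.inr (Or.inl (uniq _ _ _ hx nA)))))))
    · exact Or.inr (Or.inr (Or.inr (Or.inr (Or.inr (Or.inr (Or.inr (Or.inl (uniq _ _ _ hx nB))))))))
    · exact Or.inr (Or.inr (Or.inr (Or.inr (Or.inr (Or.inr (Or.inr (Or.inr (Or.inl (uniq _ _ _ hx nAB)))))))))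
    · exact Or.inr (Or.inr (Or.inr (Or.inr (Or.inr (Or.inr (Or.inr (Or.inr (Or.inr (Or.inl (uniq _ _ _ hx n2))))))))))
    · exact Or.inr (Or.inr (Or.inr (Or.inr (Or.inr (Or.inr (Or.inr (Or.inr (Or.inr (Or.inr (Or.inl (uniq _ _ _ hx n3)))))))))))
    · exact Or.inr (Or.inr (Or.inr (Or.inr (Or.inr (Or.inr (Or.inr (Or.inr (Or.inr (Or.inr (Or.inr (uniq _ _ _ hx n32)))))))))))
  -- the 22 constraints
  have c1 : fAB = fA ∨ fAB = fB := step ![1,0] ![0,1] ![1,1] _ _ _ (by decide) rAB mA mB mAB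
  have c2 : f2 = fA ∨ f2 = fAB := step ![1,0] ![1,1] ![2,1] _ _ _ (by decide) r2 mA mAB m2
  have c3 : f3 = fA ∨ f3 = f2 := step ![1,0] ![2,1] ![3,1] _ _ _ (by decide) r3 mA m2 m3
  have c4 : f32 = fB ∨ f32 = f3 := step ![0,1] ![3,1] ![3,2] _ _ _ (by decide) r32 mB m3 m32
  have c5 : fA = gB ∨ fA = fAB := step ![0,-1] ![1,1] ![1,0] _ _ _ (by decide) rA nB mAB mA
  have c6 : f3 = gB ∨ f3 = f32 := step ![0,-1] ![3,2] ![3,1] _ _ _ (by decide) r3 nB m32 m3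
  have c7 : gB = fA ∨ gB = gAB := step ![1,0] ![-1,-1] ![0,-1] _ _ _ (by decide) sB mA nAB nB
  have c8 : gB = f3 ∨ gB = g32 := step ![3,1] ![-3,-2] ![0,-1] _ _ _ (by decide) sB m3 n32 nB
  have c9 : gAB = fA ∨ gAB = g2 := step ![1,0] ![-2,-1] ![-1,-1] _ _ _ (by decide) sAB mA n2 nAB
  have c10 : gA = g2 ∨ gA = fAB := step ![-2,-1] ![1,1] ![-1,0] _ _ _ (by decide) sA n2 mAB nA
  have c11 : gA = fB ∨ gA = gAB := step ![0,1] ![-1,-1] ![-1,0] _ _ _ (by decide) sA mB nAB nA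
  have c12 : fB = gA ∨ fB = fAB := step ![-1,0] ![1,1] ![0,1] _ _ _ (by decide) rB nA mAB mB
  have c13 : fAB = gA ∨ fAB = f2 := step ![-1,0] ![2,1] ![1,1] _ _ _ (by decide) rAB nA m2 mAB
  have c14 : f2 = gA ∨ f2 = f3 := step ![-1,0] ![3,1] ![2,1] _ _ _ (by decide) r2 nA m3 m2
  have c15 : gA = f2 ∨ gA = g3 := step ![2,1] ![-3,-1] ![-1,0] _ _ _ (by decide) sA m2 n3 nA
  have c16 : gAB = g32 ∨ gAB = f2 := step ![-3,-2] ![2,1] ![-1,-1] _ _ _ (by decide) sAB n32 m2 nAB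
  have c17 : gAB = gA ∨ gAB = gB := step ![-1,0] ![0,-1] ![-1,-1] _ _ _ (by decide) sAB nA nB nAB
  have c18 : g2 = gA ∨ g2 = gAB := step ![-1,0] ![-1,-1] ![-2,-1] _ _ _ (by decide) s2 nA nAB n2
  have c19 : g3 = gA ∨ g3 = g2 := step ![-1,0] ![-2,-1] ![-3,-1] _ _ _ (by decide) s3 nA n2 n3
  have c20 : g32 = gB ∨ g32 = g3 := step ![0,-1] ![-3,-1] ![-3,-2] _ _ _ (by decide) s32 nB n3 n32
  have c21 : g2 = g32 ∨ g2 = fAB := step ![-3,-2] ![1,1] ![-2,-1] _ _ _ (by decide) s2 n32 mAB n2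
  have c22 : g3 = g32 ∨ g3 = fB := step ![-3,-2] ![0,1] ![-3,-1] _ _ _ (by decide) s3 n32 mB n3
  -- main claim: all colors lie in a two-element set
  have claim : ∃ u v : Fin m,
      (fA = u ∨ fA = v) ∧ (fB = u ∨ fB = v) ∧ (fAB = u ∨ fAB = v) ∧
      (f2 = u ∨ f2 = v) ∧ (f3 = u ∨ f3 = v) ∧ (f32 = u ∨ f32 = v) ∧
      (gA = u ∨ gA = v) ∧ (gB = u ∨ gB = v) ∧ (gAB = u ∨ gAB = v) ∧
      (g2 = u ∨ g2 = v) ∧ (g3 = u ∨ g3 = v) ∧ (g32 = u ∨ g32 = v) := by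
    by_cases hij : fA = fB
    · -- fA = fB: all positives equal fA
      have pAB : fAB = fA := by
        rcases c1 with h|h
        · exact h
        · exact h.trans hij.symm
      have p2 : f2 = fA := by
        rcases c2 with h|h
        · exact h
        · exact h.trans pAB
      have p3 : f3 = fA := by
        rcases c3 with h|h
        · exact h
        · exact h.trans p2
      have p32 : f32 = fA := by
        rcases c4 with h|h
        · exact h.trans hij.symm
        · exact h.trans p3
      by_cases hgA : gA = fA
      · by_cases hgB : gB = fA
        · -- all colors equal fA
          have eAB : gAB = fA := by
            rcases c17 with h|h
            · exact h.trans hgA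
            · exact h.trans hgB
          have e2 : g2 = fA := by
            rcases c18 with h|h
            · exact h.trans hgA
            · exact h.trans eAB
          have e3 : g3 = fA := by
            rcases c19 with h|h
            · exact h.trans hgA
            · exact h.trans e2
          have e32 : g32 = fA := by
            rcases c20 with h|h
            · exact h.trans hgB
            · exact h.trans e3
          exact ⟨fA, fA, Or.inl rfl, Or.inl hij.symm, Or.inl pAB, Or.inl p2, Or.inl p3,
            Or.inl p32, Or.inl hgA, Or.inl hgB, Or.inl eAB, Or.inl e2, Or.inl e3, Or.inl e32⟩
        · -- gB is a second color
          have eAB : gAB = gB := by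
            rcases c7 with h|h
            · exact absurd h hgB
            · exact h.symm
          have e32 : g32 = gB := by
            rcases c8 with h|h
            · exact absurd (h.trans p3) hgB
            · exact h.symm
          have e2 : g2 = fA ∨ g2 = gB := by
            rcases c21 with h|h
            · exact Or.inr (h.trans e32)
            · exact Or.inl (h.trans pAB)
          have e3 : g3 = fA ∨ g3 = gB := by
            rcases c22 with h|h
            · exact Or.inr (h.trans e32)
            · exact Or.inl (h.trans hij.symm)
          exact ⟨fA, gB, Or.inl rfl, Or.inl hij.symm, Or.inl pAB, Or.inl p2, Or.inl p3,
            Or.inl p32, Or.inl hgA, Or.inr rfl, Or.inr eAB, e2, e3, Or.inr e32⟩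
      · -- gA is a second color
        have eAB : gAB = gA := by
          rcases c11 with h|h
          · exact absurd (h.trans hij.symm) hgA
          · exact h.symm
        have e2 : g2 = gA := by
          rcases c10 with h|h
          · exact h.symm
          · exact absurd (h.trans pAB) hgA
        have e3 : g3 = gA := by
          rcases c15 with h|h
          · exact absurd (h.trans p2) hgA
          · exact h.symm
        have e32 : g32 = gA := by
          rcases c16 with h|h
          · exact h.symm.trans eAB
          · exact absurd ((eAB.symm.trans h).trans p2) hgA
        have eB : gB = fA ∨ gB = gA := by
          rcases c8 with h|h
          · exact Or.inl (h.trans p3)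
          · exact Or.inr (h.trans e32)
        exact ⟨fA, gA, Or.inl rfl, Or.inl hij.symm, Or.inl pAB, Or.inl p2, Or.inl p3,
          Or.inl p32, Or.inr rfl, eB, Or.inr eAB, Or.inr e2, Or.inr e3, Or.inr e32⟩
    · -- fA ≠ fB : everything lies in {fA, fB}
      have pAB : fAB = fA ∨ fAB = fB := c1
      have p2 : f2 = fA ∨ f2 = fB := by
        rcases c2 with h|h
        · exact Or.inl h
        · rw [h]; exact pAB
      have p3 : f3 = fA ∨ f3 = fB := by
        rcases c3 with h|h
        · exact Or.inl h
        · rw [h]; exact p2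
      have p32 : f32 = fA ∨ f32 = fB := by
        rcases c4 with h|h
        · exact Or.inr h
        · rw [h]; exact p3
      have hgA : gA = fA ∨ gA = fB := by
        by_contra hk
        push_neg at hk
        obtain ⟨hk1, hk2⟩ := hk
        have e1 : fAB = fB := by
          rcases c12 with h|h
          · exact absurd h.symm hk2
          · exact h.symm
        have e2 : f2 = fB := by
          rcases c13 with h|h
          · exact absurd (h.symm.trans e1) hk2
          · exact h.symm.trans e1
        have e3 : f3 = fB := by
          rcases c14 with h|h
          · exact absurd (h.symm.trans e2) hk2
          · exact h.symm.trans e2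
        have e5 : gAB = gA := by
          rcases c11 with h|h
          · exact absurd h hk2
          · exact h.symm
        have e6 : g2 = gA := by
          rcases c10 with h|h
          · exact h.symm
          · exact absurd (h.trans e1) hk2
        have e7 : g3 = gA := by
          rcases c15 with h|h
          · exact absurd (h.trans e2) hk2
          · exact h.symm
        have e8 : g32 = gA := by
          rcases c16 with h|h
          · exact h.symm.trans e5
          · exact absurd ((e5.symm.trans h).trans e2) hk2
        have e9 : gB = fB ∨ gB = gA := by
          rcases c8 with h|h
          · exact Or.inl (h.trans e3)
          · exact Or.inr (h.trans e8)
        rcases c5 with h|h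
        · rcases e9 with h9|h9
          · exact hij (h.trans h9)
          · exact hk1 (h.trans h9).symm
        · exact hij (h.trans e1)
      have hgB : gB = fA ∨ gB = fB := by
        by_contra hk
        push_neg at hk
        obtain ⟨hk1, hk2⟩ := hk
        have e1 : fAB = fA := by
          rcases c5 with h|h
          · exact absurd h.symm hk1
          · exact h.symm
        have e2 : f2 = fA := by
          rcases c2 with h|h
          · exact h
          · exact h.trans e1
        have e3 : f3 = fA := by
          rcases c3 with h|h
          · exact h
          · exact h.trans e2
        have e5 : gAB = gB := by
          rcases c7 with h|h
          · exact absurd h hk1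
          · exact h.symm
        have e6 : g32 = gB := by
          rcases c8 with h|h
          · exact absurd (h.trans e3) hk1
          · exact h.symm
        have e7 : g2 = gB := by
          rcases c9 with h|h
          · exact absurd (e5.symm.trans h) hk1
          · exact h.symm.trans e5
        have e8 : gA = gB ∨ gA = fA := by
          rcases c10 with h|h
          · exact Or.inl (h.trans e7)
          · exact Or.inr (h.trans e1)
        rcases c11 with h|h
        · rcases e8 with h8|h8
          · exact hk2 (h8.symm.trans h)
          · exact hij (h8.symm.trans h)
        · have hgagb : gA = gB := h.trans e5
          rcases c12 with h'|h'
          · exact hk2 (h'.trans hgagb).symm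
          · exact hij (h'.trans e1).symm
      have eAB : gAB = fA ∨ gAB = fB := by
        rcases c17 with h|h
        · rw [h]; exact hgA
        · rw [h]; exact hgB
      have e2 : g2 = fA ∨ g2 = fB := by
        rcases c18 with h|h
        · rw [h]; exact hgA
        · rw [h]; exact eAB
      have e3 : g3 = fA ∨ g3 = fB := by
        rcases c19 with h|h
        · rw [h]; exact hgA
        · rw [h]; exact e2
      have e32 : g32 = fA ∨ g32 = fB := by
        rcases c20 with h|h
        · rw [h]; exact hgB
        · rw [h]; exact e3
      exact ⟨fA, fB, Or.inl rfl, Or.inr rfl, pAB, p2, p3, p32, hgA, hgB, eAB, e2, e3, e32⟩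
  -- pigeonhole with three distinct part indices
  obtain ⟨u, v, h1, h2, h3, h4, h5, h6, h7, h8, h9, h10, h11, h12⟩ := claim
  set z0 : Fin m := ⟨0, by omega⟩ with hz0def
  set z1 : Fin m := ⟨1, by omega⟩ with hz1def
  set z2 : Fin m := ⟨2, by omega⟩ with hz2def
  have hz01 : z0 ≠ z1 := by simp [hz0def, hz1def, Fin.ext_iff]
  have hz02 : z0 ≠ z2 := by simp [hz0def, hz2def, Fin.ext_iff]
  have hz12 : z1 ≠ z2 := by simp [hz1def, hz2def, Fin.ext_iff]
  have key : ∀ l : Fin m, l = u ∨ l = v := by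
    intro l
    rcases partIdx l with rfl|rfl|rfl|rfl|rfl|rfl|rfl|rfl|rfl|rfl|rfl|rfl <;> assumption
  rcases key z0 with h0|h0 <;> rcases key z1 with ha|ha <;> rcases key z2 with hb|hb <;>
    first
      | exact hz01 (h0.trans ha.symm)
      | exact hz02 (h0.trans hb.symm)
      | exact hz12 (ha.trans hb.symm)
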